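/- If {(X_i,Y_i)} are i.i.d., S is a permutation invariant stopping time w.r.t. {X_i}, and T(T) is a non-randomized permutation invariant stopping time w.r.t. {Y_i}, then g(y, T) = g(π(y), T) for every internal node y of T and every coordinate permutation π. -/

import Mathlib

open Finset
open scoped Classical

noncomputable section

variable {Ω : Type*} [Fintype Ω] {𝒳 : Type*} {𝒴 : Type*}

/-- Probability of an event under weights `p` on a finite sample space. -/
def prW (p : Ω → ℝ) (A : Ω → Prop) : ℝ := ∑ ω, if A ω then p ω else 0

/-- Expectation under weights `p`. -/
def exW (p : Ω → ℝ) (f : Ω → ℝ) : ℝ := ∑ ω, p ω * f ω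

/-- `p` is a probability weight function. -/
def IsProbW (p : Ω → ℝ) : Prop := (∀ ω, 0 ≤ p ω) ∧ ∑ ω, p ω = 1

/-- Conditional probability `P(A | B)`. -/
def cprW (p : Ω → ℝ) (A B : Ω → Prop) : ℝ := prW p (fun ω => A ω ∧ B ω) / prW p B

/-- Conditional expectation `E(f | B)`. -/
def cexW (p : Ω → ℝ) (f : Ω → ℝ) (B : Ω → Prop) : ℝ :=
  (∑ ω, if B ω then p ω * f ω else 0) / prW p B

/-- positive part of a real number -/
def posP (x : ℝ) : ℝ := max x 0

/-- `S` is a (non-randomized) stopping time w.r.t. the process `X` (time starts at 1):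
its value is determined by the observations up to itself. -/
def IsSTW (X : ℕ → Ω → 𝒳) (S : Ω → ℕ) : Prop :=
  ∀ ω ω', (∀ i, 1 ≤ i → i ≤ S ω → X i ω = X i ω') → S ω' = S ω

/-- The path of the process `Y` at sample `ω`. -/
def pathOf (Y : ℕ → Ω → 𝒴) (ω : Ω) : ℕ → 𝒴 := fun i => Y i ω

/-- The path `f` extends (passes through) the node `y` (a finite string). -/
def ExtN (y : List 𝒴) (f : ℕ → 𝒴) : Prop := ∀ i : Fin y.length, f (i.1 + 1) = y.get i

/-- A stopping function on paths: its value depends only on the path up to that value.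
This is the path-representation of a non-randomized stopping time (a tree). -/
def IsStopFun (t : (ℕ → 𝒴) → ℕ) : Prop :=
  ∀ f g, (∀ i, 1 ≤ i → i ≤ t f → f i = g i) → t g = t f

/-- `y` is an internal node of the tree `t`. -/
def InternalNode (t : (ℕ → 𝒴) → ℕ) (y : List 𝒴) : Prop :=
  ∀ f, ExtN y f → y.length < t f

/-- `u` is (the stopping function of) a subtree rooted at node `y`. -/
def IsSubtreeAt (y : List 𝒴) (u : (ℕ → 𝒴) → ℕ) : Prop :=
  IsStopFun u ∧ ∀ f, ExtN y f → y.length ≤ u f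

/-- false-alarm weight `a(y)` of node `y` -/
def aW (p : Ω → ℝ) (Y : ℕ → Ω → 𝒴) (S : Ω → ℕ) (y : List 𝒴) : ℝ :=
  prW p (fun ω => ExtN y (pathOf Y ω) ∧ y.length < S ω)

/-- delay weight `b(y)` of node `y` -/
def bW (p : Ω → ℝ) (Y : ℕ → Ω → 𝒴) (S : Ω → ℕ) (y : List 𝒴) : ℝ :=
  exW p (fun ω => if ExtN y (pathOf Y ω) then posP ((y.length : ℝ) - (S ω : ℝ)) else 0)

/-- false-alarm weight `a(T_y)` of a subtree `u` rooted at `y` (the sum of `a(γ)`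
over its leaves `γ`). -/
def aSubW (p : Ω → ℝ) (Y : ℕ → Ω → 𝒴) (S : Ω → ℕ) (y : List 𝒴) (u : (ℕ → 𝒴) → ℕ) : ℝ :=
  prW p (fun ω => ExtN y (pathOf Y ω) ∧ u (pathOf Y ω) < S ω)

/-- delay weight `b(T_y)` of a subtree `u` rooted at `y` (the sum of `b(γ)` over its leaves). -/
def bSubW (p : Ω → ℝ) (Y : ℕ → Ω → 𝒴) (S : Ω → ℕ) (y : List 𝒴) (u : (ℕ → 𝒴) → ℕ) : ℝ :=
  exW p (fun ω => if ExtN y (pathOf Y ω) then posP ((u (pathOf Y ω) : ℝ) - (S ω : ℝ)) else 0)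

/-- Lagrangian cost `J_λ(T_y)` of the subtree `u` rooted at `y`. -/
def JsubW (p : Ω → ℝ) (Y : ℕ → Ω → 𝒴) (S : Ω → ℕ) (lam : ℝ) (y : List 𝒴)
    (u : (ℕ → 𝒴) → ℕ) : ℝ :=
  bSubW p Y S y u + lam * aSubW p Y S y u

/-- Lagrangian cost `J_λ(y)` of the single node `y`. -/
def JnodeW (p : Ω → ℝ) (Y : ℕ → Ω → 𝒴) (S : Ω → ℕ) (lam : ℝ) (y : List 𝒴) : ℝ :=
  bW p Y S y + lam * aW p Y S y

/-- `u` is the smallest minimal-cost rooted subtree `T_y(λ)` of `t` at node `y`,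
for Lagrange multiplier `lam`. -/
def IsOptSubtreeAt (p : Ω → ℝ) (Y : ℕ → Ω → 𝒴) (S : Ω → ℕ) (lam : ℝ)
    (t : (ℕ → 𝒴) → ℕ) (y : List 𝒴) (u : (ℕ → 𝒴) → ℕ) : Prop :=
  IsSubtreeAt y u ∧ (∀ f, ExtN y f → u f ≤ t f) ∧
  (∀ v, IsSubtreeAt y v → (∀ f, ExtN y f → v f ≤ t f) →
    JsubW p Y S lam y u ≤ JsubW p Y S lam y v) ∧
  (∀ v, IsSubtreeAt y v → (∀ f, ExtN y f → v f ≤ t f) →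
    JsubW p Y S lam y v = JsubW p Y S lam y u → ∀ f, ExtN y f → u f ≤ v f)

/-- the tradeoff quantity `g(y, T) = (b(T_y) - b(y)) / (a(y) - a(T_y))`
(with the convention 0/0 = 0, which holds automatically for real division). -/
def gW (p : Ω → ℝ) (Y : ℕ → Ω → 𝒴) (S : Ω → ℕ) (t : (ℕ → 𝒴) → ℕ) (y : List 𝒴) : ℝ :=
  (bSubW p Y S y t - bW p Y S y) / (aW p Y S y - aSubW p Y S y t)

/-- node permuted by a coordinate permutation -/
def permNode (y : List 𝒴) (π : Equiv.Perm (Fin y.length)) : List 𝒴 :=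
  List.ofFn fun i => y.get (π i)

/-- permutation invariance of a stopping time w.r.t. process `Y`:
`P(T ≤ n | Y^n = y^n) = P(T ≤ n | Y^n = π(y^n))`. -/
def PermInvST (p : Ω → ℝ) (Y : ℕ → Ω → 𝒴) (T : Ω → ℕ) (κ : ℕ) : Prop :=
  ∀ y : List 𝒴, y.length ≤ κ → ∀ π : Equiv.Perm (Fin y.length),
    cprW p (fun ω => T ω ≤ y.length) (fun ω => ExtN y (pathOf Y ω)) =
    cprW p (fun ω => T ω ≤ y.length) (fun ω => ExtN (permNode y π) (pathOf Y ω))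

/-- the pairs `(X_i, Y_i)` are i.i.d. (over the first `κ` time steps). -/
def IIDPairs [Fintype 𝒳] [Fintype 𝒴] (p : Ω → ℝ) (X : ℕ → Ω → 𝒳) (Y : ℕ → Ω → 𝒴)
    (κ : ℕ) : Prop :=
  ∃ μ : 𝒳 × 𝒴 → ℝ, (∀ z, 0 ≤ μ z) ∧ (∑ z, μ z = 1) ∧
    ∀ (x : ℕ → 𝒳) (yf : ℕ → 𝒴),
      prW p (fun ω => ∀ i, 1 ≤ i → i ≤ κ → X i ω = x i ∧ Y i ω = yf i) =
        ∏ i ∈ Finset.Icc 1 κ, μ (x i, yf i)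

/-- a randomized stopping time bounded by `κ`, given by its conditional stopping
kernel `q n y^n = P(T = n | Y^n = y^n)`. -/
def IsRandST (q : ℕ → (ℕ → 𝒴) → ℝ) (κ : ℕ) : Prop :=
  (∀ n f, 0 ≤ q n f) ∧
  (∀ n f g, (∀ i, 1 ≤ i → i ≤ n → f i = g i) → q n g = q n f) ∧
  (∀ f, ∑ n ∈ Finset.Icc 1 κ, q n f = 1)

/-- false-alarm probability `P(T < S)` of a randomized stopping time -/
def faR (p : Ω → ℝ) (Y : ℕ → Ω → 𝒴) (S : Ω → ℕ) (κ : ℕ) (q : ℕ → (ℕ → 𝒴) → ℝ) : ℝ :=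
  exW p (fun ω => ∑ n ∈ Finset.Icc 1 κ, q n (pathOf Y ω) * (if n < S ω then 1 else 0))

/-- expected reaction delay `E(T - S)⁺` of a randomized stopping time -/
def delayR (p : Ω → ℝ) (Y : ℕ → Ω → 𝒴) (S : Ω → ℕ) (κ : ℕ) (q : ℕ → (ℕ → 𝒴) → ℝ) : ℝ :=
  exW p (fun ω => ∑ n ∈ Finset.Icc 1 κ, q n (pathOf Y ω) * posP ((n : ℝ) - (S ω : ℝ)))

/-- the optimal tradeoff curve `d(α)` -/
def dW (p : Ω → ℝ) (Y : ℕ → Ω → 𝒴) (S : Ω → ℕ) (κ : ℕ) (α : ℝ) : ℝ :=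
  sInf {v | ∃ q, IsRandST q κ ∧ faR p Y S κ q ≤ α ∧ v = delayR p Y S κ q}

/-- the stopping kernel of a non-randomized stopping function -/
def detKer (t : (ℕ → 𝒴) → ℕ) : ℕ → (ℕ → 𝒴) → ℝ := fun n f => if t f = n then 1 else 0

/-- prefix of length `n` of a path (the node of depth `n` it visits) -/
def prefixOf (f : ℕ → 𝒴) (n : ℕ) : List 𝒴 := (List.range n).map fun i => f (i + 1)

/-- the one-step-lookahead node cost `c(y^n)` -/
def cnodeW (p : Ω → ℝ) (Y : ℕ → Ω → 𝒴) (S : Ω → ℕ) (lam : ℝ) (y : List 𝒴) : ℝ :=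
  cexW p (fun ω => posP ((y.length : ℝ) - (S ω : ℝ))) (fun ω => ExtN y (pathOf Y ω)) +
    lam * cprW p (fun ω => y.length < S ω) (fun ω => ExtN y (pathOf Y ω))

end


noncomputable section AuxGPerm

variable {Ω : Type*} [Fintype Ω] {𝒳 : Type*} {𝒴 : Type*}

theorem prW_nonneg {p : Ω → ℝ} (hp : ∀ ω, 0 ≤ p ω) (A : Ω → Prop) : 0 ≤ prW p A :=
  Finset.sum_nonneg fun ω _ => by by_cases h : A ω <;> simp [h, hp ω]


theorem prW_congr {p : Ω → ℝ} {A B : Ω → Prop} (h : ∀ ω, A ω ↔ B ω) : prW p A = prW p B :=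
  Finset.sum_congr rfl fun ω _ => by rw [h ω]


theorem prW_mono {p : Ω → ℝ} (hp : ∀ ω, 0 ≤ p ω) {A B : Ω → Prop}
    (h : ∀ ω, A ω → B ω) : prW p A ≤ prW p B := by
  apply Finset.sum_le_sum
  intro ω _
  by_cases hA : A ω
  · simp [hA, h ω hA]
  · by_cases hB : B ω <;> simp [hA, hB, hp ω]


theorem prW_pos_exists {p : Ω → ℝ} {A : Ω → Prop} (h : prW p A ≠ 0) :
    ∃ ω, p ω ≠ 0 ∧ A ω := by
  by_contra hc
  push_neg at hc
  apply h
  apply Finset.sum_eq_zero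
  intro ω _
  by_cases hA : A ω
  · simp [hA]
    by_contra hp0
    exact absurd hA (hc ω hp0)
  · simp [hA]


theorem prW_eq_exW (p : Ω → ℝ) (A : Ω → Prop) :
    prW p A = exW p (fun ω => if A ω then 1 else 0) := by
  unfold prW exW
  apply Finset.sum_congr rfl
  intro ω _
  by_cases hA : A ω <;> simp [hA]

-- extP

def extP {L m : ℕ} (h : L ≤ m) (π : Equiv.Perm (Fin L)) : Equiv.Perm (Fin m) where
  toFun i := if h' : i.1 < L then Fin.castLE h (π ⟨i.1, h'⟩) else i
  invFun i := if h' : i.1 < L then Fin.castLE h (π.symm ⟨i.1, h'⟩) else i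
  left_inv i := by
    by_cases h' : i.1 < L
    · simp only [h', dif_pos]
      have h2 : (Fin.castLE h (π ⟨i.1, h'⟩)).1 < L := (π ⟨i.1, h'⟩).2
      simp only [h2, dif_pos]
      apply Fin.ext
      simp [Fin.castLE]
    · simp [h']
  right_inv i := by
    by_cases h' : i.1 < L
    · simp only [h', dif_pos]
      have h2 : (Fin.castLE h (π.symm ⟨i.1, h'⟩)).1 < L := (π.symm ⟨i.1, h'⟩).2
      simp only [h2, dif_pos]
      apply Fin.ext
      simp [Fin.castLE]
    · simp [h']


theorem extP_val_lt {L m : ℕ} (h : L ≤ m) (π : Equiv.Perm (Fin L)) (i : Fin m)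
    (hi : i.1 < L) : (extP h π i).1 = (π ⟨i.1, hi⟩).1 := by
  simp [extP, Equiv.coe_fn_mk, hi]


theorem extP_apply_ge {L m : ℕ} (h : L ≤ m) (π : Equiv.Perm (Fin L)) (i : Fin m)
    (hi : L ≤ i.1) : extP h π i = i := by
  simp [extP, Equiv.coe_fn_mk, Nat.not_lt.mpr hi]


theorem extP_compat {L m κ : ℕ} (h1 : L ≤ m) (h2 : m ≤ κ) (h3 : L ≤ κ) (π : Equiv.Perm (Fin L))
    (j : Fin m) : extP h3 π (Fin.castLE h2 j) = Fin.castLE h2 (extP h1 π j) := by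
  apply Fin.ext
  simp only [extP, Equiv.coe_fn_mk, Fin.coe_castLE]
  by_cases h' : j.1 < L
  · simp [h']
  · simp [h']


theorem extP_symm {L m : ℕ} (h : L ≤ m) (π : Equiv.Perm (Fin L)) :
    (extP h π).symm = extP h π.symm := rfl

-- extendPath

def extendPath (κ : ℕ) {α : Type*} (d : α) (w : Fin κ → α) : ℕ → α :=
  fun i => if h : 1 ≤ i ∧ i ≤ κ then w ⟨i - 1, by omega⟩ else d


theorem extendPath_apply {κ : ℕ} {α : Type*} (d : α) (w : Fin κ → α) (i : ℕ)
    (hi : i < κ) : extendPath κ d w (i + 1) = w ⟨i, hi⟩ := by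
  simp only [extendPath]
  rw [dif_pos ⟨by omega, by omega⟩]
  congr 1


theorem extN_ofFn_iff {m : ℕ} (g : Fin m → 𝒴) (f : ℕ → 𝒴) :
    ExtN (List.ofFn g) f ↔ ∀ i : Fin m, f (i.1 + 1) = g i := by
  constructor
  · intro h i
    have := h ⟨i.1, by simp [i.2]⟩
    rwa [List.get_ofFn, Fin.cast_mk, Fin.eta] at this
  · intro h i
    rw [List.get_ofFn]
    exact h ⟨i.1, by simpa using i.2⟩

def sfunOf (X : ℕ → Ω → 𝒳) (S : Ω → ℕ) (κ : ℕ) (x : Fin κ → 𝒳) : ℕ :=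
  if h : ∃ ω, ∀ i : Fin κ, X (i.1 + 1) ω = x i then S h.choose else 1


theorem sfun_eq {X : ℕ → Ω → 𝒳} {S : Ω → ℕ} {κ : ℕ} (hS : IsSTW X S)
    (hSb : ∀ ω, 1 ≤ S ω ∧ S ω ≤ κ) {x : Fin κ → 𝒳} {ω : Ω}
    (hω : ∀ i : Fin κ, X (i.1 + 1) ω = x i) : sfunOf X S κ x = S ω := by
  have h : ∃ ω, ∀ i : Fin κ, X (i.1 + 1) ω = x i := ⟨ω, hω⟩
  rw [sfunOf, dif_pos h]
  refine (hS h.choose ω ?_).symm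
  intro i h1 h2
  have hiκ : i - 1 < κ := by have := (hSb h.choose).2; omega
  have e1 := h.choose_spec ⟨i - 1, hiκ⟩
  have e2 := hω ⟨i - 1, hiκ⟩
  simp only at e1 e2
  have : i - 1 + 1 = i := by omega
  rw [this] at e1 e2
  rw [e1, e2]


theorem sfun_bounds {X : ℕ → Ω → 𝒳} {S : Ω → ℕ} {κ : ℕ}
    (hSb : ∀ ω, 1 ≤ S ω ∧ S ω ≤ κ) (hκ : 1 ≤ κ) (x : Fin κ → 𝒳) :
    1 ≤ sfunOf X S κ x ∧ sfunOf X S κ x ≤ κ := by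
  rw [sfunOf]
  split
  · exact hSb _
  · exact ⟨le_refl 1, hκ⟩


theorem stopFun_le_iff {t : (ℕ → 𝒴) → ℕ} (ht : IsStopFun t) {f g : ℕ → 𝒴} {m : ℕ}
    (hagree : ∀ i, 1 ≤ i → i ≤ m → f i = g i) : t f ≤ m ↔ t g ≤ m := by
  constructor
  · intro h
    rw [ht f g (fun i h1 h2 => hagree i h1 (h2.trans h))]
    exact h
  · intro h
    rw [ht g f (fun i h1 h2 => (hagree i h1 (h2.trans h)).symm)]
    exact h


theorem tfun_eq {Y : ℕ → Ω → 𝒴} {t : (ℕ → 𝒴) → ℕ} {κ : ℕ} (ht : IsStopFun t)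
    (htb : ∀ f, 1 ≤ t f ∧ t f ≤ κ) (d : 𝒴) (ω : Ω) :
    t (extendPath κ d (fun i : Fin κ => Y (i.1 + 1) ω)) = t (pathOf Y ω) := by
  apply ht
  intro i h1 h2
  have hiκ : i - 1 < κ := by have := (htb (pathOf Y ω)).2; omega
  have : i - 1 + 1 = i := by omega
  rw [pathOf, ← this, extendPath_apply d _ _ hiκ]


theorem extN_path_iff {Y : ℕ → Ω → 𝒴} {κ : ℕ} (d : 𝒴) (ω : Ω) {z : List 𝒴}
    (hz : z.length ≤ κ) :
    ExtN z (pathOf Y ω) ↔ ExtN z (extendPath κ d (fun i : Fin κ => Y (i.1 + 1) ω)) := by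
  unfold ExtN
  apply forall_congr'
  intro i
  have hiκ : i.1 < κ := lt_of_lt_of_le i.2 hz
  rw [extendPath_apply d _ _ hiκ]
  exact Iff.rfl


theorem prW_pair {𝒳 𝒴 : Type*} [Fintype 𝒳] [Fintype 𝒴] {p : Ω → ℝ}
    {X : ℕ → Ω → 𝒳} {Y : ℕ → Ω → 𝒴} {κ : ℕ} {μ : 𝒳 × 𝒴 → ℝ}
    (hiid3 : ∀ (xf : ℕ → 𝒳) (yf : ℕ → 𝒴),
      prW p (fun ω => ∀ i, 1 ≤ i → i ≤ κ → X i ω = xf i ∧ Y i ω = yf i) =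
        ∏ i ∈ Finset.Icc 1 κ, μ (xf i, yf i))
    (d𝒳 : 𝒳) (d𝒴 : 𝒴) (x : Fin κ → 𝒳) (w : Fin κ → 𝒴) :
    prW p (fun ω => (fun i : Fin κ => X (i.1 + 1) ω) = x ∧
        (fun i : Fin κ => Y (i.1 + 1) ω) = w) =
      ∏ i : Fin κ, μ (x i, w i) := by
  have h1 : prW p (fun ω => (fun i : Fin κ => X (i.1 + 1) ω) = x ∧
      (fun i : Fin κ => Y (i.1 + 1) ω) = w) =
      prW p (fun ω => ∀ i, 1 ≤ i → i ≤ κ →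
        X i ω = extendPath κ d𝒳 x i ∧ Y i ω = extendPath κ d𝒴 w i) := by
    apply prW_congr
    intro ω
    constructor
    · rintro ⟨hx, hy⟩ i h1 h2
      have hiκ : i - 1 < κ := by omega
      have hh : i - 1 + 1 = i := by omega
      rw [← hh, extendPath_apply (hi := hiκ), extendPath_apply (hi := hiκ)]
      exact ⟨by rw [← congrFun hx ⟨i - 1, hiκ⟩], by rw [← congrFun hy ⟨i - 1, hiκ⟩]⟩
    · intro h
      constructor
      · funext i
        have := (h (i.1 + 1) (by omega) (by omega)).1
        rwa [extendPath_apply d𝒳 x i.1 i.2] at this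
      · funext i
        have := (h (i.1 + 1) (by omega) (by omega)).2
        rwa [extendPath_apply d𝒴 w i.1 i.2] at this
  rw [h1, hiid3]
  rw [show Finset.Icc 1 κ = Finset.Ico 1 (κ + 1) from by rw [Finset.Ico_add_one_right_eq_Icc],
    Finset.prod_Ico_eq_prod_range]
  simp only [Nat.add_sub_cancel]
  rw [← Fin.prod_univ_eq_prod_range (fun i => μ (extendPath κ d𝒳 x (1 + i), extendPath κ d𝒴 w (1 + i))) κ]
  apply Finset.prod_congr rfl
  intro i _
  have hh : 1 + i.1 = i.1 + 1 := by omega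
  rw [hh, extendPath_apply d𝒳 x i.1 i.2, extendPath_apply d𝒴 w i.1 i.2]


theorem exW_master {𝒳 𝒴 : Type*} [Fintype 𝒳] [Fintype 𝒴] {p : Ω → ℝ}
    {X : ℕ → Ω → 𝒳} {Y : ℕ → Ω → 𝒴} {κ : ℕ} {μ : 𝒳 × 𝒴 → ℝ}
    (hiid3 : ∀ (xf : ℕ → 𝒳) (yf : ℕ → 𝒴),
      prW p (fun ω => ∀ i, 1 ≤ i → i ≤ κ → X i ω = xf i ∧ Y i ω = yf i) =
        ∏ i ∈ Finset.Icc 1 κ, μ (xf i, yf i))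
    (d𝒳 : 𝒳) (d𝒴 : 𝒴) (F : (Fin κ → 𝒳) → (Fin κ → 𝒴) → ℝ) :
    exW p (fun ω => F (fun i : Fin κ => X (i.1 + 1) ω) (fun i : Fin κ => Y (i.1 + 1) ω)) =
      ∑ z : (Fin κ → 𝒳) × (Fin κ → 𝒴), F z.1 z.2 * ∏ i : Fin κ, μ (z.1 i, z.2 i) := by
  have key : ∀ z : (Fin κ → 𝒳) × (Fin κ → 𝒴),
      F z.1 z.2 * ∏ i : Fin κ, μ (z.1 i, z.2 i) =
      ∑ ω, if z = ((fun i : Fin κ => X (i.1 + 1) ω), (fun i : Fin κ => Y (i.1 + 1) ω))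
        then p ω * F z.1 z.2 else 0 := by
    intro z
    rw [← prW_pair hiid3 d𝒳 d𝒴 z.1 z.2, prW, Finset.mul_sum]
    apply Finset.sum_congr rfl
    intro ω _
    by_cases h : (fun i : Fin κ => X (i.1 + 1) ω) = z.1 ∧ (fun i : Fin κ => Y (i.1 + 1) ω) = z.2
    · rw [if_pos h, if_pos (by rw [Prod.ext_iff]; exact ⟨h.1.symm, h.2.symm⟩)]
      ring
    · rw [if_neg h, if_neg (by
        intro hc
        exact h ⟨(congrArg Prod.fst hc).symm, (congrArg Prod.snd hc).symm⟩)]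
      ring
  rw [Finset.sum_congr rfl (fun z _ => key z), Finset.sum_comm]
  unfold exW
  apply Finset.sum_congr rfl
  intro ω _
  rw [Finset.sum_ite_eq']
  simp


def permOfLen {a b : ℕ} (h : a = b) (ρ : Equiv.Perm (Fin b)) : Equiv.Perm (Fin a) :=
  ((finCongr h).trans ρ).trans (finCongr h.symm)


theorem permOfLen_val {a b : ℕ} (h : a = b) (ρ : Equiv.Perm (Fin b)) (i : Fin a) :
    ((permOfLen h ρ) i).1 = (ρ ⟨i.1, h ▸ i.2⟩).1 := by
  simp only [permOfLen, Equiv.trans_apply, finCongr_apply]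
  rfl


theorem permNode_ofFn {m : ℕ} (g : Fin m → 𝒴) (ρm : Equiv.Perm (Fin m)) :
    permNode (List.ofFn g) (permOfLen (List.length_ofFn : (List.ofFn g).length = m) ρm) =
      List.ofFn (fun j => g (ρm j)) := by
  apply List.ext_get
  · simp [permNode]
  · intro i h1 h2
    unfold permNode at h1 ⊢
    rw [List.get_ofFn, List.get_ofFn, List.get_ofFn]
    apply congrArg g
    apply Fin.ext
    simp only [Fin.coe_cast]
    rw [permOfLen_val]
    rfl


theorem cprW_congr {p : Ω → ℝ} {A A' B B' : Ω → Prop} (hA : ∀ ω, A ω ↔ A' ω)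
    (hB : ∀ ω, B ω ↔ B' ω) : cprW p A B = cprW p A' B' := by
  unfold cprW
  rw [prW_congr hB, prW_congr (fun ω => and_congr (hA ω) (hB ω))]


theorem cprS_eq {p : Ω → ℝ} {X : ℕ → Ω → 𝒳} {S : Ω → ℕ} (hS : IsSTW X S) {m : ℕ}
    (g : Fin m → 𝒳)
    (hpos : prW p (fun ω => ∀ i : Fin m, X (i.1 + 1) ω = g i) ≠ 0) :
    cprW p (fun ω => S ω ≤ m) (fun ω => ∀ i : Fin m, X (i.1 + 1) ω = g i) =
      if ∃ ω, p ω ≠ 0 ∧ (∀ i : Fin m, X (i.1 + 1) ω = g i) ∧ S ω ≤ m then 1 else 0 := by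
  by_cases hC : ∃ ω, p ω ≠ 0 ∧ (∀ i : Fin m, X (i.1 + 1) ω = g i) ∧ S ω ≤ m
  · rw [if_pos hC]
    obtain ⟨ω₀, hp0, hB0, hS0⟩ := hC
    have hall : ∀ ω', (∀ i : Fin m, X (i.1 + 1) ω' = g i) → S ω' ≤ m := by
      intro ω' hB'
      have : S ω' = S ω₀ := by
        apply hS ω₀ ω'
        intro i h1 h2
        have hi : i - 1 < m := by omega
        have e1 := hB0 ⟨i - 1, hi⟩
        have e2 := hB' ⟨i - 1, hi⟩
        simp only at e1 e2
        have hh : i - 1 + 1 = i := by omega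
        rw [hh] at e1 e2
        rw [e1, e2]
      omega
    unfold cprW
    rw [prW_congr (B := fun ω => ∀ i : Fin m, X (i.1 + 1) ω = g i)
      (fun ω => ⟨fun h => h.2, fun h => ⟨hall ω h, h⟩⟩)]
    exact div_self hpos
  · rw [if_neg hC]
    unfold cprW
    have h0 : prW p (fun ω => S ω ≤ m ∧ ∀ i : Fin m, X (i.1 + 1) ω = g i) = 0 := by
      apply Finset.sum_eq_zero
      intro ω _
      by_cases hA : S ω ≤ m ∧ ∀ i : Fin m, X (i.1 + 1) ω = g i
      · rw [if_pos hA]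
        by_contra hp0
        exact hC ⟨ω, hp0, hA.2, hA.1⟩
      · rw [if_neg hA]
    rw [h0, zero_div]


theorem cprT_eq {p : Ω → ℝ} {Y : ℕ → Ω → 𝒴} {t : (ℕ → 𝒴) → ℕ} (ht : IsStopFun t)
    {m : ℕ} (d : 𝒴) (g : Fin m → 𝒴)
    (hpos : prW p (fun ω => ∀ i : Fin m, Y (i.1 + 1) ω = g i) ≠ 0) :
    cprW p (fun ω => t (pathOf Y ω) ≤ m) (fun ω => ∀ i : Fin m, Y (i.1 + 1) ω = g i) =
      if t (extendPath m d g) ≤ m then 1 else 0 := by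
  have key : ∀ ω, (∀ i : Fin m, Y (i.1 + 1) ω = g i) →
      (t (pathOf Y ω) ≤ m ↔ t (extendPath m d g) ≤ m) := by
    intro ω hB
    apply stopFun_le_iff ht
    intro i h1 h2
    have hi : i - 1 < m := by omega
    have hh : i - 1 + 1 = i := by omega
    rw [← hh, extendPath_apply d g (i - 1) hi]
    exact hB ⟨i - 1, hi⟩
  by_cases hT : t (extendPath m d g) ≤ m
  · rw [if_pos hT]
    unfold cprW
    rw [prW_congr (B := fun ω => ∀ i : Fin m, Y (i.1 + 1) ω = g i)
      (fun ω => ⟨fun h => h.2, fun h => ⟨(key ω h).2 hT, h⟩⟩)]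
    exact div_self hpos
  · rw [if_neg hT]
    unfold cprW
    have h0 : prW p (fun ω => t (pathOf Y ω) ≤ m ∧ ∀ i : Fin m, Y (i.1 + 1) ω = g i) = 0 := by
      apply Finset.sum_eq_zero
      intro ω _
      rw [if_neg]
      rintro ⟨h1, h2⟩
      exact hT ((key ω h2).1 h1)
    rw [h0, zero_div]


theorem linkS {p : Ω → ℝ} {X : ℕ → Ω → 𝒳} {S : Ω → ℕ} {κ : ℕ} (hS : IsSTW X S)
    (hSb : ∀ ω, 1 ≤ S ω ∧ S ω ≤ κ) {m : ℕ} (hmκ : m ≤ κ) (x : Fin κ → 𝒳)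
    (hpos : prW p (fun ω => ∀ i : Fin κ, X (i.1 + 1) ω = x i) ≠ 0) :
    (∃ ω, p ω ≠ 0 ∧ (∀ i : Fin m, X (i.1 + 1) ω = x (Fin.castLE hmκ i)) ∧ S ω ≤ m) ↔
      sfunOf X S κ x ≤ m := by
  obtain ⟨ω₀, hp₀, hfull⟩ := prW_pos_exists hpos
  have hsf : sfunOf X S κ x = S ω₀ := sfun_eq hS hSb hfull
  constructor
  · rintro ⟨ω, hpω, hB, hSm⟩
    have : S ω₀ = S ω := by
      apply hS ω ω₀
      intro i h1 h2
      have hi : i - 1 < m := by omega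
      have hiκ : i - 1 < κ := by omega
      have e1 := hB ⟨i - 1, hi⟩
      have e2 := hfull ⟨i - 1, hiκ⟩
      simp only at e1 e2
      have hh : i - 1 + 1 = i := by omega
      rw [hh] at e1 e2
      rw [e1, e2]
      rfl
    omega
  · intro h
    refine ⟨ω₀, hp₀, fun i => ?_, by omega⟩
    exact hfull (Fin.castLE hmκ i)


theorem Ssym {p : Ω → ℝ} {X : ℕ → Ω → 𝒳} {S : Ω → ℕ} {κ : ℕ} (hS : IsSTW X S)
    (hSb : ∀ ω, 1 ≤ S ω ∧ S ω ≤ κ) (hpermS : PermInvST p X S κ)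
    {L m : ℕ} (hLm : L ≤ m) (hmκ : m ≤ κ) (hLk : L ≤ κ) (ρ : Equiv.Perm (Fin L)) (x : Fin κ → 𝒳)
    (pos1 : prW p (fun ω => ∀ i : Fin κ, X (i.1 + 1) ω = x i) ≠ 0)
    (pos2 : prW p (fun ω => ∀ i : Fin κ, X (i.1 + 1) ω = x (extP hLk ρ i)) ≠ 0)
    (hp : ∀ ω, 0 ≤ p ω) :
    sfunOf X S κ (fun i => x (extP hLk ρ i)) ≤ m ↔ sfunOf X S κ x ≤ m := by
  set g : Fin m → 𝒳 := fun i => x (Fin.castLE hmκ i) with hg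
  -- positivity at level m
  have posm1 : prW p (fun ω => ∀ i : Fin m, X (i.1 + 1) ω = g i) ≠ 0 := by
    have hle := prW_mono (A := fun ω => ∀ i : Fin κ, X (i.1 + 1) ω = x i)
      (B := fun ω => ∀ i : Fin m, X (i.1 + 1) ω = g i) hp
      (fun ω h => fun i : Fin m => h (Fin.castLE hmκ i))
    have h0 := prW_nonneg hp (fun ω => ∀ i : Fin κ, X (i.1 + 1) ω = x i)
    intro hc
    rw [hc] at hle
    exact pos1 (le_antisymm hle h0)
  have posm2 : prW p (fun ω => ∀ i : Fin m, X (i.1 + 1) ω = g (extP hLm ρ i)) ≠ 0 := by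
    have hle := prW_mono (A := fun ω => ∀ i : Fin κ, X (i.1 + 1) ω = x (extP hLk ρ i))
      (B := fun ω => ∀ i : Fin m, X (i.1 + 1) ω = g (extP hLm ρ i)) hp
      (fun ω h => fun i : Fin m => by
        have h2 := h (Fin.castLE hmκ i)
        rw [extP_compat hLm hmκ hLk ρ i] at h2
        exact h2)
    have h0 := prW_nonneg hp (fun ω => ∀ i : Fin κ, X (i.1 + 1) ω = x (extP hLk ρ i))
    intro hc
    rw [hc] at hle
    exact pos2 (le_antisymm hle h0)
  -- instantiate permutation invariance
  have hps := hpermS (List.ofFn g) (by rw [List.length_ofFn]; exact hmκ)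
    (permOfLen (List.length_ofFn : (List.ofFn g).length = m) (extP hLm ρ))
  rw [permNode_ofFn] at hps
  have e1 : cprW p (fun ω => S ω ≤ (List.ofFn g).length)
      (fun ω => ExtN (List.ofFn g) (pathOf X ω)) =
      cprW p (fun ω => S ω ≤ m) (fun ω => ∀ i : Fin m, X (i.1 + 1) ω = g i) :=
    cprW_congr (fun ω => by rw [List.length_ofFn]) (fun ω => extN_ofFn_iff g (pathOf X ω))
  have e2 : cprW p (fun ω => S ω ≤ (List.ofFn g).length)
      (fun ω => ExtN (List.ofFn (fun j => g (extP hLm ρ j))) (pathOf X ω)) =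
      cprW p (fun ω => S ω ≤ m)
        (fun ω => ∀ i : Fin m, X (i.1 + 1) ω = g (extP hLm ρ i)) :=
    cprW_congr (fun ω => by rw [List.length_ofFn])
      (fun ω => extN_ofFn_iff (fun j => g (extP hLm ρ j)) (pathOf X ω))
  rw [e1, e2] at hps
  rw [cprS_eq hS g posm1, cprS_eq hS (fun j => g (extP hLm ρ j)) posm2] at hps
  have hiff : (∃ ω, p ω ≠ 0 ∧ (∀ i : Fin m, X (i.1 + 1) ω = g i) ∧ S ω ≤ m) ↔
      (∃ ω, p ω ≠ 0 ∧ (∀ i : Fin m, X (i.1 + 1) ω = g (extP hLm ρ i)) ∧ S ω ≤ m) := by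
    by_cases hC1 : ∃ ω, p ω ≠ 0 ∧ (∀ i : Fin m, X (i.1 + 1) ω = g i) ∧ S ω ≤ m
    · rw [if_pos hC1] at hps
      by_cases hC2 : ∃ ω, p ω ≠ 0 ∧ (∀ i : Fin m, X (i.1 + 1) ω = g (extP hLm ρ i)) ∧ S ω ≤ m
      · exact iff_of_true hC1 hC2
      · rw [if_neg hC2] at hps; norm_num at hps
    · rw [if_neg hC1] at hps
      by_cases hC2 : ∃ ω, p ω ≠ 0 ∧ (∀ i : Fin m, X (i.1 + 1) ω = g (extP hLm ρ i)) ∧ S ω ≤ m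
      · rw [if_pos hC2] at hps; norm_num at hps
      · exact iff_of_false hC1 hC2
  have l1 := linkS hS hSb hmκ x pos1
  have l2 := linkS hS hSb hmκ (fun i => x (extP hLk ρ i)) pos2
  have conv2 : (∃ ω, p ω ≠ 0 ∧ (∀ i : Fin m, X (i.1 + 1) ω = g (extP hLm ρ i)) ∧ S ω ≤ m) ↔
      (∃ ω, p ω ≠ 0 ∧ (∀ i : Fin m, X (i.1 + 1) ω =
        (fun i => x (extP hLk ρ i)) (Fin.castLE hmκ i)) ∧ S ω ≤ m) := by
    apply exists_congr
    intro ω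
    refine and_congr Iff.rfl (and_congr ?_ Iff.rfl)
    apply forall_congr'
    intro i
    have hc : (fun i => x (extP hLk ρ i)) (Fin.castLE hmκ i) = g (extP hLm ρ i) := by
      show x (extP (hLm.trans hmκ) ρ (Fin.castLE hmκ i)) = x (Fin.castLE hmκ (extP hLm ρ i))
      rw [extP_compat hLm hmκ hLk ρ i]
    rw [hc]
  exact l2.symm.trans (conv2.symm.trans (hiff.symm.trans l1))


theorem Tsym {p : Ω → ℝ} {Y : ℕ → Ω → 𝒴} {t : (ℕ → 𝒴) → ℕ} {κ : ℕ}
    (ht : IsStopFun t) (hpermT : PermInvST p Y (fun ω => t (pathOf Y ω)) κ)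
    {L m : ℕ} (hLm : L ≤ m) (hmκ : m ≤ κ) (hLk : L ≤ κ) (ρ : Equiv.Perm (Fin L)) (w : Fin κ → 𝒴)
    (d : 𝒴)
    (pos1 : prW p (fun ω => ∀ i : Fin κ, Y (i.1 + 1) ω = w i) ≠ 0)
    (pos2 : prW p (fun ω => ∀ i : Fin κ, Y (i.1 + 1) ω = w (extP hLk ρ i)) ≠ 0)
    (hp : ∀ ω, 0 ≤ p ω) :
    t (extendPath κ d (fun i => w (extP hLk ρ i))) ≤ m ↔
      t (extendPath κ d w) ≤ m := by
  set g : Fin m → 𝒴 := fun i => w (Fin.castLE hmκ i) with hg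
  have posm1 : prW p (fun ω => ∀ i : Fin m, Y (i.1 + 1) ω = g i) ≠ 0 := by
    have hle := prW_mono (A := fun ω => ∀ i : Fin κ, Y (i.1 + 1) ω = w i)
      (B := fun ω => ∀ i : Fin m, Y (i.1 + 1) ω = g i) hp
      (fun ω h => fun i : Fin m => h (Fin.castLE hmκ i))
    have h0 := prW_nonneg hp (fun ω => ∀ i : Fin κ, Y (i.1 + 1) ω = w i)
    intro hc
    rw [hc] at hle
    exact pos1 (le_antisymm hle h0)
  have posm2 : prW p (fun ω => ∀ i : Fin m, Y (i.1 + 1) ω = g (extP hLm ρ i)) ≠ 0 := by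
    have hle := prW_mono (A := fun ω => ∀ i : Fin κ, Y (i.1 + 1) ω = w (extP hLk ρ i))
      (B := fun ω => ∀ i : Fin m, Y (i.1 + 1) ω = g (extP hLm ρ i)) hp
      (fun ω h => fun i : Fin m => by
        have h2 := h (Fin.castLE hmκ i)
        rw [extP_compat hLm hmκ hLk ρ i] at h2
        exact h2)
    have h0 := prW_nonneg hp (fun ω => ∀ i : Fin κ, Y (i.1 + 1) ω = w (extP hLk ρ i))
    intro hc
    rw [hc] at hle
    exact pos2 (le_antisymm hle h0)
  have hps := hpermT (List.ofFn g) (by rw [List.length_ofFn]; exact hmκ)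
    (permOfLen (List.length_ofFn : (List.ofFn g).length = m) (extP hLm ρ))
  rw [permNode_ofFn] at hps
  simp only [] at hps
  have e1 : cprW p (fun ω => t (pathOf Y ω) ≤ (List.ofFn g).length)
      (fun ω => ExtN (List.ofFn g) (pathOf Y ω)) =
      cprW p (fun ω => t (pathOf Y ω) ≤ m) (fun ω => ∀ i : Fin m, Y (i.1 + 1) ω = g i) :=
    cprW_congr (fun ω => by rw [List.length_ofFn]) (fun ω => extN_ofFn_iff g (pathOf Y ω))
  have e2 : cprW p (fun ω => t (pathOf Y ω) ≤ (List.ofFn g).length)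
      (fun ω => ExtN (List.ofFn (fun j => g (extP hLm ρ j))) (pathOf Y ω)) =
      cprW p (fun ω => t (pathOf Y ω) ≤ m)
        (fun ω => ∀ i : Fin m, Y (i.1 + 1) ω = g (extP hLm ρ i)) :=
    cprW_congr (fun ω => by rw [List.length_ofFn])
      (fun ω => extN_ofFn_iff (fun j => g (extP hLm ρ j)) (pathOf Y ω))
  rw [e1, e2] at hps
  rw [cprT_eq ht d g posm1, cprT_eq ht d (fun j => g (extP hLm ρ j)) posm2] at hps
  -- relate the two finite words to the full ones
  have r1 : t (extendPath m d g) ≤ m ↔ t (extendPath κ d w) ≤ m := by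
    apply stopFun_le_iff ht
    intro i h1 h2
    have hi : i - 1 < m := by omega
    have hiκ : i - 1 < κ := by omega
    have hh : i - 1 + 1 = i := by omega
    rw [← hh, extendPath_apply d g (i - 1) hi, extendPath_apply d w (i - 1) hiκ]
    rfl
  have r2 : t (extendPath m d (fun j => g (extP hLm ρ j))) ≤ m ↔
      t (extendPath κ d (fun i => w (extP hLk ρ i))) ≤ m := by
    apply stopFun_le_iff ht
    intro i h1 h2
    have hi : i - 1 < m := by omega
    have hiκ : i - 1 < κ := by omega
    have hh : i - 1 + 1 = i := by omega
    rw [← hh, extendPath_apply d _ (i - 1) hi, extendPath_apply d _ (i - 1) hiκ]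
    show g (extP hLm ρ ⟨i - 1, hi⟩) = w (extP (hLm.trans hmκ) ρ ⟨i - 1, hiκ⟩)
    rw [hg]
    show w (Fin.castLE hmκ (extP hLm ρ ⟨i - 1, hi⟩)) = w (extP (hLm.trans hmκ) ρ ⟨i - 1, hiκ⟩)
    rw [← extP_compat hLm hmκ hLk ρ ⟨i - 1, hi⟩]
    rfl
  rw [← r1, ← r2]
  by_cases hT1 : t (extendPath m d g) ≤ m
  · rw [if_pos hT1] at hps
    by_cases hT2 : t (extendPath m d (fun j => g (extP hLm ρ j))) ≤ m
    · exact iff_of_true hT2 hT1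
    · rw [if_neg hT2] at hps; norm_num at hps
  · rw [if_neg hT1] at hps
    by_cases hT2 : t (extendPath m d (fun j => g (extP hLm ρ j))) ≤ m
    · rw [if_pos hT2] at hps; norm_num at hps
    · exact iff_of_false hT2 hT1


def precomp {κ : ℕ} (σ : Equiv.Perm (Fin κ)) (α : Type*) : (Fin κ → α) ≃ (Fin κ → α) where
  toFun x := x ∘ σ
  invFun x := x ∘ σ.symm
  left_inv x := by funext i; simp
  right_inv x := by funext i; simp


theorem exW_congr {p : Ω → ℝ} {f g : Ω → ℝ} (h : ∀ ω, f ω = g ω) : exW p f = exW p g :=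
  Finset.sum_congr rfl fun ω _ => by rw [h ω]


theorem extP_refl {L : ℕ} (ρ : Equiv.Perm (Fin L)) : extP (le_refl L) ρ = ρ := by
  apply Equiv.ext
  intro j
  apply Fin.ext
  rw [extP_val_lt (le_refl L) ρ j j.2]


theorem posP_sub_nat {a b : ℕ} (h : b ≤ a) : posP ((a : ℝ) - b) = (a : ℝ) - b :=
  max_eq_left (sub_nonneg.mpr (Nat.cast_le.mpr h))


theorem ext_perm_iff {κ : ℕ} (d : 𝒴) (z : List 𝒴) (hz : z.length ≤ κ)
    (ρ : Equiv.Perm (Fin z.length)) (w : Fin κ → 𝒴) :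
    ExtN (permNode z ρ) (extendPath κ d (fun i => w (extP hz ρ i))) ↔
      ExtN z (extendPath κ d w) := by
  rw [permNode, extN_ofFn_iff]
  have step : ∀ i : Fin z.length,
      (extendPath κ d (fun i => w (extP hz ρ i)) (i.1 + 1) = z.get (ρ i)) ↔
      (w (Fin.castLE hz (ρ i)) = z.get (ρ i)) := by
    intro i
    rw [extendPath_apply d _ i.1 (lt_of_lt_of_le i.2 hz)]
    have hq : extP hz ρ ⟨i.1, lt_of_lt_of_le i.2 hz⟩ = Fin.castLE hz (ρ i) := by
      have h2 : extP hz ρ (Fin.castLE hz i) =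
          Fin.castLE hz (extP (le_refl z.length) ρ i) := extP_compat (le_refl z.length) hz hz ρ i
      rw [extP_refl] at h2
      exact h2
    rw [hq]
  rw [forall_congr' step]
  constructor
  · intro h j
    have hx := h (ρ.symm j)
    rw [Equiv.apply_symm_apply] at hx
    have e : extendPath κ d w (j.1 + 1) = w (Fin.castLE hz j) := by
      rw [extendPath_apply d w j.1 (lt_of_lt_of_le j.2 hz)]
      rfl
    rw [e]
    exact hx
  · intro h i
    have hx := h (ρ i)
    rw [extendPath_apply d w (ρ i).1 (lt_of_lt_of_le (ρ i).2 hz)] at hx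
    exact hx

end AuxGPerm

/-- if `(X_i,Y_i)` are i.i.d., `S` is permutation invariant w.r.t. `X`,
and the non-randomized stopping time of tree `t` is permutation invariant w.r.t. `Y`,
then `g(y,T) = g(π(y),T)` for every internal node `y` and coordinate permutation `π`. -/
theorem g_perm_invariant
    {Ω 𝒳 𝒴 : Type*} [Fintype Ω] [Fintype 𝒳] [Fintype 𝒴]
    (p : Ω → ℝ) (hp : IsProbW p) (X : ℕ → Ω → 𝒳) (Y : ℕ → Ω → 𝒴) (κ : ℕ)
    (hiid : IIDPairs p X Y κ)
    (S : Ω → ℕ) (hS : IsSTW X S) (hSb : ∀ ω, 1 ≤ S ω ∧ S ω ≤ κ)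
    (hpermS : PermInvST p X S κ)
    (t : (ℕ → 𝒴) → ℕ) (ht : IsStopFun t) (htb : ∀ f, 1 ≤ t f ∧ t f ≤ κ)
    (hpermT : PermInvST p Y (fun ω => t (pathOf Y ω)) κ) :
    ∀ (y : List 𝒴) (π : Equiv.Perm (Fin y.length)),
      InternalNode t y → gW p Y S t y = gW p Y S t (permNode y π) := by
  intro y π hy
  by_cases hΩe : IsEmpty Ω
  · simp [gW, aW, bW, aSubW, bSubW, prW, exW, Finset.univ_eq_empty]
  haveI hne : Nonempty Ω := not_isEmpty_iff.mp hΩe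
  obtain ⟨ω₀⟩ := hne
  obtain ⟨μ, hμ0, hμ1, hiid3⟩ := hiid
  have hκ : 1 ≤ κ := le_trans (hSb ω₀).1 (hSb ω₀).2
  obtain ⟨z0, -, hz0⟩ := Finset.exists_ne_zero_of_sum_ne_zero
    (by rw [hμ1]; exact one_ne_zero : ∑ z : 𝒳 × 𝒴, μ z ≠ 0)
  -- notation
  have hLκ : y.length < κ := by
    have hext : ExtN y (fun i => if h : i - 1 < y.length ∧ 1 ≤ i then y.get ⟨i - 1, h.1⟩ else z0.2) := by
      intro i
      simp only
      rw [dif_pos ⟨by simpa using i.2, by omega⟩]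
      congr 1
    have h1 := hy _ hext
    have h2 := (htb (fun i => if h : i - 1 < y.length ∧ 1 ≤ i then y.get ⟨i - 1, h.1⟩ else z0.2)).2
    omega
  have hLκ' : y.length ≤ κ := hLκ.le
  have hlen' : (permNode y π).length = y.length := by rw [permNode, List.length_ofFn]
  -- expansions
  have NexpB : ∀ (z : List 𝒴), z.length ≤ κ → bSubW p Y S z t =
      ∑ u : (Fin κ → 𝒳) × (Fin κ → 𝒴),
        (if ExtN z (extendPath κ z0.2 u.2) then
          posP ((t (extendPath κ z0.2 u.2) : ℝ) - (sfunOf X S κ u.1 : ℝ)) else 0) *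
          ∏ i : Fin κ, μ (u.1 i, u.2 i) := by
    intro z hz
    rw [bSubW, exW_congr (g := fun ω =>
        (fun x w => if ExtN z (extendPath κ z0.2 w) then
          posP ((t (extendPath κ z0.2 w) : ℝ) - (sfunOf X S κ x : ℝ)) else 0)
        (fun i : Fin κ => X (i.1 + 1) ω) (fun i : Fin κ => Y (i.1 + 1) ω)) ?_]
    · exact exW_master hiid3 z0.1 z0.2 (fun x w => if ExtN z (extendPath κ z0.2 w) then
        posP ((t (extendPath κ z0.2 w) : ℝ) - (sfunOf X S κ x : ℝ)) else 0)
    · intro ω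
      simp only
      rw [sfun_eq hS hSb (fun i => rfl), tfun_eq ht htb z0.2 ω]
      exact if_congr (extN_path_iff z0.2 ω hz) rfl rfl
  have NexpW : ∀ (z : List 𝒴), z.length ≤ κ → bW p Y S z =
      ∑ u : (Fin κ → 𝒳) × (Fin κ → 𝒴),
        (if ExtN z (extendPath κ z0.2 u.2) then
          posP ((z.length : ℝ) - (sfunOf X S κ u.1 : ℝ)) else 0) *
          ∏ i : Fin κ, μ (u.1 i, u.2 i) := by
    intro z hz
    rw [bW, exW_congr (g := fun ω =>
        (fun x (w : Fin κ → 𝒴) => if ExtN z (extendPath κ z0.2 w) then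
          posP ((z.length : ℝ) - (sfunOf X S κ x : ℝ)) else 0)
        (fun i : Fin κ => X (i.1 + 1) ω) (fun i : Fin κ => Y (i.1 + 1) ω)) ?_]
    · exact exW_master hiid3 z0.1 z0.2 (fun x (w : Fin κ → 𝒴) =>
        if ExtN z (extendPath κ z0.2 w) then
          posP ((z.length : ℝ) - (sfunOf X S κ x : ℝ)) else 0)
    · intro ω
      simp only
      rw [sfun_eq hS hSb (fun i => rfl)]
      exact if_congr (extN_path_iff z0.2 ω hz) rfl rfl
  have AexpW : ∀ (z : List 𝒴), z.length ≤ κ → aW p Y S z =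
      ∑ u : (Fin κ → 𝒳) × (Fin κ → 𝒴),
        (if ExtN z (extendPath κ z0.2 u.2) then
          (if z.length < sfunOf X S κ u.1 then (1 : ℝ) else 0) else 0) *
          ∏ i : Fin κ, μ (u.1 i, u.2 i) := by
    intro z hz
    rw [aW, prW_eq_exW, exW_congr (g := fun ω =>
        (fun x (w : Fin κ → 𝒴) => if ExtN z (extendPath κ z0.2 w) then
          (if z.length < sfunOf X S κ x then (1 : ℝ) else 0) else 0)
        (fun i : Fin κ => X (i.1 + 1) ω) (fun i : Fin κ => Y (i.1 + 1) ω)) ?_]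
    · exact exW_master hiid3 z0.1 z0.2 (fun x (w : Fin κ → 𝒴) =>
        if ExtN z (extendPath κ z0.2 w) then
          (if z.length < sfunOf X S κ x then (1 : ℝ) else 0) else 0)
    · intro ω
      simp only
      rw [sfun_eq hS hSb (fun i => rfl)]
      by_cases hE : ExtN z (pathOf Y ω)
      · rw [if_pos ((extN_path_iff z0.2 ω hz).mp hE)]
        by_cases hc : z.length < S ω
        · rw [if_pos ⟨hE, hc⟩, if_pos hc]
        · rw [if_neg (fun hcc => hc hcc.2), if_neg hc]
      · rw [if_neg (fun hcc => hE hcc.1),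
          if_neg (fun hcc => hE ((extN_path_iff z0.2 ω hz).mpr hcc))]
  have AexpS : ∀ (z : List 𝒴), z.length ≤ κ → aSubW p Y S z t =
      ∑ u : (Fin κ → 𝒳) × (Fin κ → 𝒴),
        (if ExtN z (extendPath κ z0.2 u.2) then
          (if t (extendPath κ z0.2 u.2) < sfunOf X S κ u.1 then (1 : ℝ) else 0) else 0) *
          ∏ i : Fin κ, μ (u.1 i, u.2 i) := by
    intro z hz
    rw [aSubW, prW_eq_exW, exW_congr (g := fun ω =>
        (fun x (w : Fin κ → 𝒴) => if ExtN z (extendPath κ z0.2 w) then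
          (if t (extendPath κ z0.2 w) < sfunOf X S κ x then (1 : ℝ) else 0) else 0)
        (fun i : Fin κ => X (i.1 + 1) ω) (fun i : Fin κ => Y (i.1 + 1) ω)) ?_]
    · exact exW_master hiid3 z0.1 z0.2 (fun x (w : Fin κ → 𝒴) =>
        if ExtN z (extendPath κ z0.2 w) then
          (if t (extendPath κ z0.2 w) < sfunOf X S κ x then (1 : ℝ) else 0) else 0)
    · intro ω
      simp only
      rw [sfun_eq hS hSb (fun i => rfl), tfun_eq ht htb z0.2 ω]
      by_cases hE : ExtN z (pathOf Y ω)
      · rw [if_pos ((extN_path_iff z0.2 ω hz).mp hE)]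
        by_cases hc : t (pathOf Y ω) < S ω
        · rw [if_pos ⟨hE, hc⟩, if_pos hc]
        · rw [if_neg (fun hcc => hc hcc.2), if_neg hc]
      · rw [if_neg (fun hcc => hE hcc.1),
          if_neg (fun hcc => hE ((extN_path_iff z0.2 ω hz).mpr hcc))]
  -- combined difference forms
  have Ndiff : ∀ (z : List 𝒴), z.length ≤ κ → bSubW p Y S z t - bW p Y S z =
      ∑ u : (Fin κ → 𝒳) × (Fin κ → 𝒴),
        (if ExtN z (extendPath κ z0.2 u.2) then
          (posP ((t (extendPath κ z0.2 u.2) : ℝ) - (sfunOf X S κ u.1 : ℝ)) -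
           posP ((z.length : ℝ) - (sfunOf X S κ u.1 : ℝ))) else 0) *
          ∏ i : Fin κ, μ (u.1 i, u.2 i) := by
    intro z hz
    rw [NexpB z hz, NexpW z hz, ← Finset.sum_sub_distrib]
    apply Finset.sum_congr rfl
    intro u _
    by_cases hE : ExtN z (extendPath κ z0.2 u.2)
    · rw [if_pos hE, if_pos hE, if_pos hE]; ring
    · rw [if_neg hE, if_neg hE, if_neg hE]; ring
  have Ddiff : ∀ (z : List 𝒴), z.length ≤ κ → aW p Y S z - aSubW p Y S z t =
      ∑ u : (Fin κ → 𝒳) × (Fin κ → 𝒴),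
        (if ExtN z (extendPath κ z0.2 u.2) then
          ((if z.length < sfunOf X S κ u.1 then (1 : ℝ) else 0) -
           (if t (extendPath κ z0.2 u.2) < sfunOf X S κ u.1 then (1 : ℝ) else 0)) else 0) *
          ∏ i : Fin κ, μ (u.1 i, u.2 i) := by
    intro z hz
    rw [AexpW z hz, AexpS z hz, ← Finset.sum_sub_distrib]
    apply Finset.sum_congr rfl
    intro u _
    by_cases hE : ExtN z (extendPath κ z0.2 u.2)
    · rw [if_pos hE, if_pos hE, if_pos hE]; ring
    · rw [if_neg hE, if_neg hE, if_neg hE]; ring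
  -- the permutation invariance of the generic sums
  have main : ∀ V : ℕ → ℕ → ℕ → ℝ,
      (∀ s s' T : ℕ, 1 ≤ s → s ≤ κ → 1 ≤ s' → s' ≤ κ → y.length < T → T ≤ κ →
        ((s ≤ y.length ∧ s' ≤ y.length) ∨ s = s') → V y.length s' T = V y.length s T) →
      ∑ u : (Fin κ → 𝒳) × (Fin κ → 𝒴),
        (if ExtN (permNode y π) (extendPath κ z0.2 u.2) then
          V (permNode y π).length (sfunOf X S κ u.1) (t (extendPath κ z0.2 u.2)) else 0) *
          ∏ i : Fin κ, μ (u.1 i, u.2 i) =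
      ∑ u : (Fin κ → 𝒳) × (Fin κ → 𝒴),
        (if ExtN y (extendPath κ z0.2 u.2) then
          V y.length (sfunOf X S κ u.1) (t (extendPath κ z0.2 u.2)) else 0) *
          ∏ i : Fin κ, μ (u.1 i, u.2 i) := by
    intro V hV
    refine (Fintype.sum_equiv
      (Equiv.prodCongr (precomp (extP hLκ' π) 𝒳) (precomp (extP hLκ' π) 𝒴))
      _ _ ?_).symm
    rintro ⟨x, w⟩
    show (if ExtN y (extendPath κ z0.2 w) then
        V y.length (sfunOf X S κ x) (t (extendPath κ z0.2 w)) else 0) *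
        ∏ i : Fin κ, μ (x i, w i) =
      (if ExtN (permNode y π) (extendPath κ z0.2 (fun i => w (extP hLκ' π i))) then
        V (permNode y π).length (sfunOf X S κ (fun i => x (extP hLκ' π i)))
          (t (extendPath κ z0.2 (fun i => w (extP hLκ' π i)))) else 0) *
        ∏ i : Fin κ, μ (x (extP hLκ' π i), w (extP hLκ' π i))
    have hΦeq : ∏ i : Fin κ, μ (x (extP hLκ' π i), w (extP hLκ' π i)) =
        ∏ i : Fin κ, μ (x i, w i) := Equiv.prod_comp (extP hLκ' π) (fun i => μ (x i, w i))
    have hExt : ExtN (permNode y π) (extendPath κ z0.2 (fun i => w (extP hLκ' π i))) ↔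
        ExtN y (extendPath κ z0.2 w) := ext_perm_iff z0.2 y hLκ' π w
    by_cases hE : ExtN y (extendPath κ z0.2 w)
    · rw [if_pos hE, if_pos (hExt.mpr hE), hΦeq, hlen']
      by_cases hΦ0 : (∏ i : Fin κ, μ (x i, w i)) = 0
      · rw [hΦ0]; ring
      · -- positivity of the basic events
        have hΦpos : 0 < ∏ i : Fin κ, μ (x i, w i) :=
          lt_of_le_of_ne (Finset.prod_nonneg fun i _ => hμ0 _) (Ne.symm hΦ0)
        have pairpos : prW p (fun ω => (fun i : Fin κ => X (i.1 + 1) ω) = x ∧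
            (fun i : Fin κ => Y (i.1 + 1) ω) = w) = ∏ i : Fin κ, μ (x i, w i) :=
          prW_pair hiid3 z0.1 z0.2 x w
        have posX : prW p (fun ω => ∀ i : Fin κ, X (i.1 + 1) ω = x i) ≠ 0 := by
          have hm := prW_mono (A := fun ω => (fun i : Fin κ => X (i.1 + 1) ω) = x ∧
              (fun i : Fin κ => Y (i.1 + 1) ω) = w)
            (B := fun ω => ∀ i : Fin κ, X (i.1 + 1) ω = x i) hp.1
            (fun ω h i => congrFun h.1 i)
          rw [pairpos] at hm
          intro hc
          rw [hc] at hm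
          linarith
        have posY : prW p (fun ω => ∀ i : Fin κ, Y (i.1 + 1) ω = w i) ≠ 0 := by
          have hm := prW_mono (A := fun ω => (fun i : Fin κ => X (i.1 + 1) ω) = x ∧
              (fun i : Fin κ => Y (i.1 + 1) ω) = w)
            (B := fun ω => ∀ i : Fin κ, Y (i.1 + 1) ω = w i) hp.1
            (fun ω h i => congrFun h.2 i)
          rw [pairpos] at hm
          intro hc
          rw [hc] at hm
          linarith
        have pairpos2 : prW p (fun ω =>
            (fun i : Fin κ => X (i.1 + 1) ω) = (fun i => x (extP hLκ' π i)) ∧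
            (fun i : Fin κ => Y (i.1 + 1) ω) = (fun i => w (extP hLκ' π i))) =
            ∏ i : Fin κ, μ (x i, w i) := by
          rw [prW_pair hiid3 z0.1 z0.2 _ _]
          exact hΦeq
        have posXσ : prW p (fun ω => ∀ i : Fin κ,
            X (i.1 + 1) ω = x (extP hLκ' π i)) ≠ 0 := by
          have hm := prW_mono (A := fun ω =>
              (fun i : Fin κ => X (i.1 + 1) ω) = (fun i => x (extP hLκ' π i)) ∧
              (fun i : Fin κ => Y (i.1 + 1) ω) = (fun i => w (extP hLκ' π i)))
            (B := fun ω => ∀ i : Fin κ, X (i.1 + 1) ω = x (extP hLκ' π i)) hp.1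
            (fun ω h i => congrFun h.1 i)
          rw [pairpos2] at hm
          intro hc
          rw [hc] at hm
          linarith
        have posYσ : prW p (fun ω => ∀ i : Fin κ,
            Y (i.1 + 1) ω = w (extP hLκ' π i)) ≠ 0 := by
          have hm := prW_mono (A := fun ω =>
              (fun i : Fin κ => X (i.1 + 1) ω) = (fun i => x (extP hLκ' π i)) ∧
              (fun i : Fin κ => Y (i.1 + 1) ω) = (fun i => w (extP hLκ' π i)))
            (B := fun ω => ∀ i : Fin κ, Y (i.1 + 1) ω = w (extP hLκ' π i)) hp.1
            (fun ω h i => congrFun h.2 i)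
          rw [pairpos2] at hm
          intro hc
          rw [hc] at hm
          linarith
        -- T' = T
        have hTκ : t (extendPath κ z0.2 w) ≤ κ := (htb _).2
        have hTgt : y.length < t (extendPath κ z0.2 w) := hy _ hE
        have hT'κ : t (extendPath κ z0.2 (fun i => w (extP hLκ' π i))) ≤ κ := (htb _).2
        have iTL := Tsym ht hpermT (le_refl y.length) hLκ' hLκ' π w z0.2 posY posYσ hp.1
        have hT'gt : y.length < t (extendPath κ z0.2 (fun i => w (extP hLκ' π i))) := by
          rcases Nat.lt_or_ge y.length (t (extendPath κ z0.2 (fun i => w (extP hLκ' π i)))) with h | h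
          · exact h
          · exact absurd (iTL.mp h) (by omega)
        have iT2 := Tsym ht hpermT hTgt.le hTκ hLκ' π w z0.2 posY posYσ hp.1
        have iT3 := Tsym ht hpermT hT'gt.le hT'κ hLκ' π w z0.2 posY posYσ hp.1
        have hTT : t (extendPath κ z0.2 (fun i => w (extP hLκ' π i))) =
            t (extendPath κ z0.2 w) :=
          le_antisymm (iT2.mpr (le_refl _)) (iT3.mp (le_refl _))
        -- s relation
        have hsb : 1 ≤ sfunOf X S κ x ∧ sfunOf X S κ x ≤ κ := sfun_bounds hSb hκ x
        have hsb' : 1 ≤ sfunOf X S κ (fun i => x (extP hLκ' π i)) ∧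
            sfunOf X S κ (fun i => x (extP hLκ' π i)) ≤ κ := sfun_bounds hSb hκ _
        have iSL := Ssym hS hSb hpermS (le_refl y.length) hLκ' hLκ' π x posX posXσ hp.1
        have hss : (sfunOf X S κ x ≤ y.length ∧ sfunOf X S κ (fun i => x (extP hLκ' π i)) ≤ y.length) ∨
            sfunOf X S κ x = sfunOf X S κ (fun i => x (extP hLκ' π i)) := by
          by_cases hsL : sfunOf X S κ x ≤ y.length
          · exact Or.inl ⟨hsL, iSL.mpr hsL⟩
          · right
            have hs'y.length : ¬ sfunOf X S κ (fun i => x (extP hLκ' π i)) ≤ y.length :=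
              fun hc => hsL (iSL.mp hc)
            have iS2 := Ssym hS hSb hpermS (le_of_not_ge hsL) hsb.2 hLκ' π x posX posXσ hp.1
            have iS3 := Ssym hS hSb hpermS (le_of_not_ge hs'y.length) hsb'.2 hLκ' π x posX posXσ hp.1
            exact le_antisymm (iS3.mp (le_refl _)) (iS2.mpr (le_refl _))
        rw [hTT]
        rw [hV (sfunOf X S κ x) (sfunOf X S κ (fun i => x (extP hLκ' π i)))
          (t (extendPath κ z0.2 w)) hsb.1 hsb.2 hsb'.1 hsb'.2 hTgt hTκ
          (by tauto)]
    · rw [if_neg hE, if_neg (fun hc => hE (hExt.mp hc)), zero_mul, zero_mul]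
  -- conclude
  have hlen'κ : (permNode y π).length ≤ κ := by rw [hlen']; exact hLκ'
  have mnum := main (fun ℓ s T => posP ((T : ℝ) - (s : ℝ)) - posP ((ℓ : ℝ) - (s : ℝ)))
    (by
      intro s s' T hs1 hs2 hs1' hs2' hLT hTκ hrel
      show posP ((T : ℝ) - (s' : ℝ)) - posP ((y.length : ℝ) - (s' : ℝ)) =
        posP ((T : ℝ) - (s : ℝ)) - posP ((y.length : ℝ) - (s : ℝ))
      rcases hrel with ⟨hA, hB⟩ | hEq
      · rw [posP_sub_nat (by omega : s' ≤ T), posP_sub_nat (by omega : s' ≤ y.length),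
          posP_sub_nat (by omega : s ≤ T), posP_sub_nat (by omega : s ≤ y.length)]
        ring
      · rw [hEq])
  have mden := main (fun ℓ s T => (if ℓ < s then (1 : ℝ) else 0) - (if T < s then (1 : ℝ) else 0))
    (by
      intro s s' T hs1 hs2 hs1' hs2' hLT hTκ hrel
      show (if y.length < s' then (1 : ℝ) else 0) - (if T < s' then (1 : ℝ) else 0) =
        (if y.length < s then (1 : ℝ) else 0) - (if T < s then (1 : ℝ) else 0)
      rcases hrel with ⟨hA, hB⟩ | hEq
      · rw [if_neg (by omega : ¬ y.length < s'), if_neg (by omega : ¬ y.length < s),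
          if_neg (by omega : ¬ T < s'), if_neg (by omega : ¬ T < s)]
      · rw [hEq])
  unfold gW
  rw [Ndiff y hLκ', Ndiff (permNode y π) hlen'κ, Ddiff y hLκ',
    Ddiff (permNode y π) hlen'κ, mnum, mden]
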